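/- arXiv:1810.05013 — 4 statements merged into one kernel-verified Lean document; each statement's English description precedes it below -/
import Mathlib

section
/- Let Δ ⊆ ℝ be an interval and g: Δ → ℝ a C^3 diffeomorphism onto g(Δ) with negative Schwarzian derivative. If J ⊆ Δ is a subinterval such that g(Δ) contains the η-scaled neighborhood of g(J) (both components of N(g(J),η) \ g(J) have length η·diam(g(J))), then for all x, y ∈ J one has (η/(1+η))^2 ≤ g'(y)/g'(x) ≤ ((1+η)/η)^2. -/
open Set

/-- The Schwarzian derivative of `f` computed with derivatives within a set `s`. -/
noncomputable def SchwarzianWithin (f : ℝ → ℝ) (s : Set ℝ) (x : ℝ) : ℝ :=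
  iteratedDerivWithin 3 f s x / derivWithin f s x
    - 3 / 2 * (iteratedDerivWithin 2 f s x / derivWithin f s x) ^ 2

theorem bd_aux (g : ℝ → ℝ) (Δ : Set ℝ) (η : ℝ) (hη : 0 < η)
    (hΔ : Δ.OrdConnected) (hΔu : UniqueDiffOn ℝ Δ)
    (hg : ContDiffOn ℝ 3 g Δ)
    (hS : ∀ x ∈ Δ, SchwarzianWithin g Δ x < 0)
    (a b : ℝ) (hab : a ≤ b) (hJ : Set.Icc a b ⊆ Δ)
    (c d : ℝ) (hcd : g '' Set.Icc a b = Set.Icc c d)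
    (hN : Set.Icc (c - η * (d - c)) (d + η * (d - c)) ⊆ g '' Δ)
    (hpos : ∀ x ∈ Δ, 0 < derivWithin g Δ x) :
    ∀ x ∈ Set.Icc a b, ∀ y ∈ Set.Icc a b,
      (η / (1 + η)) ^ 2 ≤ derivWithin g Δ y / derivWithin g Δ x ∧
      derivWithin g Δ y / derivWithin g Δ x ≤ ((1 + η) / η) ^ 2 := by
  have hηη : (0:ℝ) < 1 + η := by linarith
  set E1 := derivWithin g Δ with hE1def
  set E2 := derivWithin E1 Δ with hE2def
  set E3 := derivWithin E2 Δ with hE3def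
  have hconv : Convex ℝ Δ := convex_iff_ordConnected.mpr hΔ
  have hE1c2 : ContDiffOn ℝ 2 E1 Δ := hg.derivWithin hΔu (by norm_num)
  have hE2c1 : ContDiffOn ℝ 1 E2 Δ := hE1c2.derivWithin hΔu (by norm_num)
  have hE1d : ∀ t ∈ Δ, HasDerivWithinAt g (E1 t) Δ t := fun t ht =>
    ((hg.differentiableOn (by norm_num)) t ht).hasDerivWithinAt
  have hE2d : ∀ t ∈ Δ, HasDerivWithinAt E1 (E2 t) Δ t := fun t ht =>
    ((hE1c2.differentiableOn (by norm_num)) t ht).hasDerivWithinAt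
  have hE3d : ∀ t ∈ Δ, HasDerivWithinAt E2 (E3 t) Δ t := fun t ht =>
    ((hE2c1.differentiableOn (by norm_num)) t ht).hasDerivWithinAt
  -- interior versions
  have hgdI : ∀ t ∈ interior Δ, HasDerivAt g (E1 t) t := fun t ht =>
    (hE1d t (interior_subset ht)).hasDerivAt (mem_interior_iff_mem_nhds.mp ht)
  have hE1dI : ∀ t ∈ interior Δ, HasDerivAt E1 (E2 t) t := fun t ht =>
    (hE2d t (interior_subset ht)).hasDerivAt (mem_interior_iff_mem_nhds.mp ht)
  have hE2dI : ∀ t ∈ interior Δ, HasDerivAt E2 (E3 t) t := fun t ht =>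
    (hE3d t (interior_subset ht)).hasDerivAt (mem_interior_iff_mem_nhds.mp ht)
  -- Schwarzian in terms of E2 E3
  have hiter2 : ∀ t ∈ Δ, iteratedDerivWithin 2 g Δ t = E2 t := by
    intro t ht
    rw [show (2:ℕ) = 1 + 1 from rfl, iteratedDerivWithin_succ]
    exact derivWithin_congr (fun y hy => congrFun iteratedDerivWithin_one y)
      (congrFun iteratedDerivWithin_one t)
  have hiter3 : ∀ t ∈ Δ, iteratedDerivWithin 3 g Δ t = E3 t := by
    intro t ht
    rw [show (3:ℕ) = 2 + 1 from rfl, iteratedDerivWithin_succ]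
    exact derivWithin_congr (fun y hy => hiter2 y hy) (hiter2 t ht)
  have hSnum : ∀ t ∈ Δ, 2 * E1 t * E3 t - 3 * E2 t ^ 2 < 0 := by
    intro t ht
    have h0 := hS t ht
    rw [SchwarzianWithin, hiter3 t ht, hiter2 t ht] at h0
    have h1 : (0:ℝ) < E1 t := hpos t ht
    have heq : E3 t / E1 t - 3 / 2 * (E2 t / E1 t) ^ 2
        = (2 * E1 t * E3 t - 3 * E2 t ^ 2) / (2 * E1 t ^ 2) := by
      field_simp
    rw [heq] at h0
    rcases div_neg_iff.mp h0 with ⟨_, h⟩ | ⟨h, _⟩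
    · nlinarith
    · exact h
  set W : ℝ → ℝ := fun t => Real.sqrt (E1 t) with hWdef
  have hWpos : ∀ t ∈ Δ, 0 < W t := fun t ht => Real.sqrt_pos.mpr (hpos t ht)
  have hWsq : ∀ t ∈ Δ, W t ^ 2 = E1 t := fun t ht => Real.sq_sqrt (hpos t ht).le
  have hWc : ContinuousOn W Δ := Real.continuous_sqrt.comp_continuousOn hE1c2.continuousOn
  set V : ℝ → ℝ := fun t => E2 t / (2 * E1 t * Real.sqrt (E1 t)) with hVdef
  have hWdI : ∀ t ∈ interior Δ, HasDerivAt W (V t * E1 t) t := by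
    intro t ht
    have htΔ := interior_subset ht
    have h2 := (hE1dI t ht).sqrt (ne_of_gt (hpos t htΔ))
    convert h2 using 1
    have hs : Real.sqrt (E1 t) ≠ 0 := (hWpos t htΔ).ne'
    have h1 : E1 t ≠ 0 := (hpos t htΔ).ne'
    field_simp [hVdef]
    simp only [hVdef]
    field_simp
  -- strict monotonicity of g
  have hgsm : StrictMonoOn g Δ := strictMonoOn_of_deriv_pos hconv hg.continuousOn
    (fun t ht => by rw [(hgdI t ht).deriv]; exact hpos t (interior_subset ht))
  -- V strictly antitone
  have hVanti : StrictAntiOn V Δ := by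
    apply strictAntiOn_of_deriv_neg hconv
    · apply ContinuousOn.div hE2c1.continuousOn
      · exact (continuousOn_const.mul hE1c2.continuousOn).mul
          (Real.continuous_sqrt.comp_continuousOn hE1c2.continuousOn)
      · intro t ht
        have := hpos t ht
        have := hWpos t ht
        positivity
    · intro t ht
      have htΔ := interior_subset ht
      have h1 : (0:ℝ) < E1 t := hpos t htΔ
      have hs0 : 0 < Real.sqrt (E1 t) := hWpos t htΔ
      have hsne : Real.sqrt (E1 t) ≠ 0 := hs0.ne'
      have hssq : Real.sqrt (E1 t) ^ 2 = E1 t := hWsq t htΔ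
      have hden : HasDerivAt (fun u => 2 * E1 u * Real.sqrt (E1 u))
          (2 * E2 t * Real.sqrt (E1 t)
            + 2 * E1 t * (E2 t / (2 * Real.sqrt (E1 t)))) t :=
        (((hE1dI t ht).const_mul 2).mul ((hE1dI t ht).sqrt h1.ne'))
      have hdenne : 2 * E1 t * Real.sqrt (E1 t) ≠ 0 := by positivity
      have hq := (hE2dI t ht).div hden hdenne
      have hd : deriv V t = (E3 t * (2 * E1 t * Real.sqrt (E1 t))
          - E2 t * (2 * E2 t * Real.sqrt (E1 t)
            + 2 * E1 t * (E2 t / (2 * Real.sqrt (E1 t)))))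
          / (2 * E1 t * Real.sqrt (E1 t)) ^ 2 := hq.deriv
      rw [hd]
      apply div_neg_of_neg_of_pos _ (by positivity)
      have hnum : E3 t * (2 * E1 t * Real.sqrt (E1 t))
          - E2 t * (2 * E2 t * Real.sqrt (E1 t)
            + 2 * E1 t * (E2 t / (2 * Real.sqrt (E1 t))))
          = (2 * E1 t * E3 t - 3 * E2 t ^ 2) * Real.sqrt (E1 t) := by
        field_simp
        linear_combination (E2 t ^ 2) * hssq
      rw [hnum]
      exact mul_neg_of_neg_of_pos (hSnum t htΔ) hs0
  -- Cauchy MVT slope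
  have hslope : ∀ t1 ∈ Δ, ∀ t2 ∈ Δ, t1 < t2 →
      ∃ ξ ∈ Ioo t1 t2, W t2 - W t1 = (g t2 - g t1) * V ξ := by
    intro t1 h1 t2 h2 hlt
    have hsub : Icc t1 t2 ⊆ Δ := hΔ.out h1 h2
    have hio : Ioo t1 t2 ⊆ interior Δ :=
      interior_maximal (Ioo_subset_Icc_self.trans hsub) isOpen_Ioo
    obtain ⟨ξ, hξ, heq⟩ := exists_ratio_hasDerivAt_eq_ratio_slope W
      (fun t => V t * E1 t) hlt (hWc.mono hsub) (fun x hx => hWdI x (hio hx))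
      g E1 (hg.continuousOn.mono hsub) (fun x hx => hgdI x (hio hx))
    refine ⟨ξ, hξ, ?_⟩
    have hE1ne : E1 ξ ≠ 0 := (hpos ξ (hsub (Ioo_subset_Icc_self hξ))).ne'
    have : (W t2 - W t1) * E1 ξ = ((g t2 - g t1) * V ξ) * E1 ξ := by
      rw [← heq]; ring
    exact mul_right_cancel₀ hE1ne this
  -- chord inequality
  have hchord : ∀ t1 t2 t3, t1 ∈ Δ → t2 ∈ Δ → t3 ∈ Δ → t1 < t2 → t2 < t3 →
      W t1 * (g t3 - g t2) + W t3 * (g t2 - g t1) < W t2 * (g t3 - g t1) := by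
    intro t1 t2 t3 h1 h2 h3 h12 h23
    obtain ⟨ξ, hξ, hs1⟩ := hslope t1 h1 t2 h2 h12
    obtain ⟨ζ, hζ, hs2⟩ := hslope t2 h2 t3 h3 h23
    have hξΔ : ξ ∈ Δ := (hΔ.out h1 h2) (Ioo_subset_Icc_self hξ)
    have hζΔ : ζ ∈ Δ := (hΔ.out h2 h3) (Ioo_subset_Icc_self hζ)
    have hVlt : V ζ < V ξ := hVanti hξΔ hζΔ (lt_trans hξ.2 hζ.1)
    have hg12 : 0 < g t2 - g t1 := sub_pos.mpr (hgsm h1 h2 h12)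
    have hg23 : 0 < g t3 - g t2 := sub_pos.mpr (hgsm h2 h3 h23)
    nlinarith [mul_pos hg12 hg23, mul_pos (mul_pos hg12 hg23) (sub_pos.mpr hVlt)]
  -- trivial case a = b
  rcases eq_or_lt_of_le hab with rfl | hab'
  · intro x hx y hy
    have hxa : x = a := le_antisymm hx.2 hx.1
    have hya : y = a := le_antisymm hy.2 hy.1
    have hpa : (0:ℝ) < E1 a := hpos a (hJ ⟨le_rfl, le_rfl⟩)
    rw [hxa, hya, div_self hpa.ne']
    constructor
    · have h1 : η / (1 + η) ≤ 1 := by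
        rw [div_le_one hηη]; linarith
      nlinarith [div_nonneg hη.le hηη.le]
    · have h1 : 1 ≤ (1 + η) / η := by
        rw [le_div_iff₀ hη]; linarith
      nlinarith
  -- main case
  have haΔ : a ∈ Δ := hJ ⟨le_rfl, hab⟩
  have hbΔ : b ∈ Δ := hJ ⟨hab, le_rfl⟩
  have hmemJ : ∀ t ∈ Icc a b, g t ∈ Icc c d := fun t ht => hcd ▸ mem_image_of_mem g ht
  have hga : g a = c := by
    have h1 : c ≤ g a := (hmemJ a ⟨le_rfl, hab⟩).1
    obtain ⟨t0, ht0, hgt0⟩ : ∃ t0 ∈ Icc a b, g t0 = c := by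
      have : c ∈ g '' Icc a b := by
        rw [hcd]; exact ⟨le_rfl, le_trans h1 (hmemJ a ⟨le_rfl, hab⟩).2⟩
      exact this.imp (fun t ht => ⟨ht.1, ht.2⟩)
    have h2 : g a ≤ g t0 := hgsm.monotoneOn haΔ (hJ ht0) ht0.1
    linarith [hgt0 ▸ h2]
  have hgb : g b = d := by
    have h1 : g b ≤ d := (hmemJ b ⟨hab, le_rfl⟩).2
    obtain ⟨t0, ht0, hgt0⟩ : ∃ t0 ∈ Icc a b, g t0 = d := by
      have : d ∈ g '' Icc a b := by
        rw [hcd]; exact ⟨le_trans (hmemJ b ⟨hab, le_rfl⟩).1 h1, le_rfl⟩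
      exact this.imp (fun t ht => ⟨ht.1, ht.2⟩)
    have h2 : g t0 ≤ g b := hgsm.monotoneOn (hJ ht0) hbΔ ht0.2
    linarith [hgt0 ▸ h2]
  have hcdlt : c < d := by
    rw [← hga, ← hgb]; exact hgsm haΔ hbΔ hab'
  have hL : (0:ℝ) < d - c := sub_pos.mpr hcdlt
  -- spare points
  obtain ⟨tB, htBΔ, hgtB⟩ : ∃ tB ∈ Δ, g tB = d + η * (d - c) := by
    have : d + η * (d - c) ∈ g '' Δ := hN ⟨by nlinarith, le_rfl⟩
    exact this.imp (fun t ht => ⟨ht.1, ht.2⟩)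
  obtain ⟨tA, htAΔ, hgtA⟩ : ∃ tA ∈ Δ, g tA = c - η * (d - c) := by
    have : c - η * (d - c) ∈ g '' Δ := hN ⟨le_rfl, by nlinarith⟩
    exact this.imp (fun t ht => ⟨ht.1, ht.2⟩)
  have htBb : b < tB := by
    by_contra h
    push_neg at h
    have := hgsm.monotoneOn htBΔ hbΔ h
    rw [hgtB, hgb] at this
    nlinarith
  have htAa : tA < a := by
    by_contra h
    push_neg at h
    have := hgsm.monotoneOn haΔ htAΔ h
    rw [hgtA, hga] at this
    nlinarith
  -- key inequality
  have key : ∀ u ∈ Icc a b, ∀ v ∈ Icc a b, η * W v ≤ (1 + η) * W u := by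
    intro u hu v hv
    have huΔ := hJ hu
    have hvΔ := hJ hv
    have hWu : 0 < W u := hWpos u huΔ
    have hWv : 0 < W v := hWpos v hvΔ
    have hgu := hmemJ u hu
    have hgv := hmemJ v hv
    rcases lt_trichotomy u v with h | rfl | h
    · -- left spare tA < u < v
      have hc := hchord tA u v htAΔ huΔ hvΔ (lt_of_lt_of_le htAa hu.1) h
      have hWA : 0 ≤ W tA := Real.sqrt_nonneg _
      have hQpos : 0 < g v - g u := sub_pos.mpr (hgsm huΔ hvΔ h)
      have hP : η * (d - c) ≤ g u - g tA := by rw [hgtA]; linarith [hgu.1]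
      have hQ : g v - g u ≤ d - c := by linarith [hgu.1, hgv.2]
      have hPpos : 0 < g u - g tA := lt_of_lt_of_le (mul_pos hη hL) hP
      have h4 : η * (g v - g u) ≤ g u - g tA :=
        le_trans (mul_le_mul_of_nonneg_left hQ hη.le) hP
      nlinarith [mul_nonneg hWA hQpos.le, mul_nonneg hWu.le (sub_nonneg.mpr h4),
        mul_nonneg hη.le (mul_nonneg hWA hQpos.le)]
    · linarith [mul_pos hη hWu, hWu]
    · -- right spare v < u < tB
      have hc := hchord v u tB hvΔ huΔ htBΔ h (lt_of_le_of_lt hu.2 htBb)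
      have hWB : 0 ≤ W tB := Real.sqrt_nonneg _
      have hQpos : 0 < g u - g v := sub_pos.mpr (hgsm hvΔ huΔ h)
      have hP : η * (d - c) ≤ g tB - g u := by rw [hgtB]; linarith [hgu.2]
      have hQ : g u - g v ≤ d - c := by linarith [hgv.1, hgu.2]
      have hPpos : 0 < g tB - g u := lt_of_lt_of_le (mul_pos hη hL) hP
      have h4 : η * (g u - g v) ≤ g tB - g u :=
        le_trans (mul_le_mul_of_nonneg_left hQ hη.le) hP
      nlinarith [mul_nonneg hWB hQpos.le, mul_nonneg hWu.le (sub_nonneg.mpr h4),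
        mul_nonneg hη.le (mul_nonneg hWB hQpos.le)]
  -- conclude
  intro x hx y hy
  have hxΔ := hJ hx
  have hyΔ := hJ hy
  have hWx : 0 < W x := hWpos x hxΔ
  have hWy : 0 < W y := hWpos y hyΔ
  have hE1x : 0 < E1 x := hpos x hxΔ
  have hE1y : 0 < E1 y := hpos y hyΔ
  have k1 : η * W y ≤ (1 + η) * W x := key x hx y hy
  have k2 : η * W x ≤ (1 + η) * W y := key y hy x hx
  have hsqx : W x ^ 2 = E1 x := hWsq x hxΔ
  have hsqy : W y ^ 2 = E1 y := hWsq y hyΔ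
  constructor
  · rw [div_pow, div_le_div_iff₀ (by positivity : (0:ℝ) < (1+η)^2) hE1x]
    calc η ^ 2 * E1 x = (η * W x) * (η * W x) := by rw [← hsqx]; ring
      _ ≤ ((1+η) * W y) * ((1+η) * W y) :=
          mul_self_le_mul_self (mul_nonneg hη.le hWx.le) k2
      _ = E1 y * (1+η) ^ 2 := by rw [← hsqy]; ring
  · rw [div_pow, div_le_div_iff₀ hE1x (by positivity : (0:ℝ) < η^2)]
    calc E1 y * η ^ 2 = (η * W y) * (η * W y) := by rw [← hsqy]; ring
      _ ≤ ((1+η) * W x) * ((1+η) * W x) :=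
          mul_self_le_mul_self (mul_nonneg hη.le hWy.le) k1
      _ = (1+η) ^ 2 * E1 x := by rw [← hsqx]; ring

/-- General Bounded Distortion Property: if `g : Δ → ℝ` is a `C³` diffeomorphism onto its
image with negative Schwarzian derivative, `J = [a,b] ⊆ Δ` with `g(J) = [c,d]`, and `g(Δ)`
contains the `η`-scaled neighborhood of `g(J)`, then
`(η/(1+η))² ≤ g'(y)/g'(x) ≤ ((1+η)/η)²` for all `x, y ∈ J`. -/
theorem bounded_distortion (g : ℝ → ℝ) (Δ : Set ℝ) (η : ℝ) (hη : 0 < η)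
    (hΔ : Δ.OrdConnected) (hΔu : UniqueDiffOn ℝ Δ)
    (hg : ContDiffOn ℝ 3 g Δ) (hinj : Set.InjOn g Δ)
    (hg' : ∀ x ∈ Δ, derivWithin g Δ x ≠ 0)
    (hS : ∀ x ∈ Δ, SchwarzianWithin g Δ x < 0)
    (a b : ℝ) (hab : a ≤ b) (hJ : Set.Icc a b ⊆ Δ)
    (c d : ℝ) (hcd : g '' Set.Icc a b = Set.Icc c d)
    (hN : Set.Icc (c - η * (d - c)) (d + η * (d - c)) ⊆ g '' Δ) :
    ∀ x ∈ Set.Icc a b, ∀ y ∈ Set.Icc a b,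
      (η / (1 + η)) ^ 2 ≤ derivWithin g Δ y / derivWithin g Δ x ∧
      derivWithin g Δ y / derivWithin g Δ x ≤ ((1 + η) / η) ^ 2 := by
  have haΔ : a ∈ Δ := hJ ⟨le_rfl, hab⟩
  rcases lt_or_gt_of_ne (hg' a haΔ) with hnega | hposa
  · -- derivative negative everywhere; apply aux to -g
    have hallneg : ∀ x ∈ Δ, derivWithin g Δ x < 0 := by
      intro x hx
      rcases lt_or_gt_of_ne (hg' x hx) with h | h
      · exact h
      · exfalso
        have hpre : IsPreconnected Δ := (convex_iff_ordConnected.mpr hΔ).isPreconnected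
        have hcont : ContinuousOn (derivWithin g Δ) Δ :=
          (hg.derivWithin hΔu (m := 2) (by norm_num)).continuousOn
        obtain ⟨z, hz, hz0⟩ := hpre.intermediate_value haΔ hx hcont
          (⟨hnega.le, h.le⟩ : (0:ℝ) ∈ Icc (derivWithin g Δ a) (derivWithin g Δ x))
        exact hg' z hz hz0
    have hGd : ∀ x ∈ Δ, derivWithin (fun t => -g t) Δ x = -derivWithin g Δ x :=
      fun x hx => derivWithin.neg
    have hGS : ∀ x ∈ Δ, SchwarzianWithin (fun t => -g t) Δ x < 0 := by
      intro x hx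
      have h2 := iteratedDerivWithin_fun_neg (n := 2) (x := x) (s := Δ) g
      have h3 := iteratedDerivWithin_fun_neg (n := 3) (x := x) (s := Δ) g
      have hd := hGd x hx
      unfold SchwarzianWithin
      rw [h2, h3, hd, neg_div_neg_eq, neg_div_neg_eq]
      exact hS x hx
    have hGcd : (fun t => -g t) '' Set.Icc a b = Set.Icc (-d) (-c) := by
      have : (fun t => -g t) = (Neg.neg ∘ g) := rfl
      rw [this, Set.image_comp, hcd, Set.image_neg_Icc]
    have hGN : Set.Icc ((-d) - η * ((-c) - (-d))) ((-c) + η * ((-c) - (-d)))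
        ⊆ (fun t => -g t) '' Δ := by
      intro z hz
      have hz' : -z ∈ Set.Icc (c - η * (d - c)) (d + η * (d - c)) := by
        constructor
        · have := hz.2; simp only [mem_Icc] at hz ⊢; linarith [hz.2]
        · have := hz.1; simp only [mem_Icc] at hz ⊢; linarith [hz.1]
      obtain ⟨t, ht, hgt⟩ := hN hz'
      exact ⟨t, ht, by simp [hgt]⟩
    have hGpos : ∀ x ∈ Δ, 0 < derivWithin (fun t => -g t) Δ x := by
      intro x hx
      rw [hGd x hx]
      linarith [hallneg x hx]
    have key := bd_aux (fun t => -g t) Δ η hη hΔ hΔu hg.neg hGS a b hab hJ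
      (-d) (-c) hGcd hGN hGpos
    intro x hx y hy
    have hres := key x hx y hy
    rwa [hGd x (hJ hx), hGd y (hJ hy), neg_div_neg_eq] at hres
  · -- derivative positive everywhere
    have hallpos : ∀ x ∈ Δ, 0 < derivWithin g Δ x := by
      intro x hx
      rcases lt_or_gt_of_ne (hg' x hx) with h | h
      · exfalso
        have hpre : IsPreconnected Δ := (convex_iff_ordConnected.mpr hΔ).isPreconnected
        have hcont : ContinuousOn (derivWithin g Δ) Δ :=
          (hg.derivWithin hΔu (m := 2) (by norm_num)).continuousOn
        obtain ⟨z, hz, hz0⟩ := hpre.intermediate_value hx haΔ hcont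
          (⟨h.le, hposa.le⟩ : (0:ℝ) ∈ Icc (derivWithin g Δ x) (derivWithin g Δ a))
        exact hg' z hz hz0
      · exact h
    exact bd_aux g Δ η hη hΔ hΔu hg hS a b hab hJ c d hcd hN hallpos
end

section
/- Let Δ ⊆ ℝ be an interval and g: Δ → ℝ a C^3 diffeomorphism onto g(Δ) with negative Schwarzian derivative. If J ⊆ Δ and g(Δ) contains the η-scaled neighborhood of g(J), then Δ contains the (½η^3(2+η)^{-2})-scaled neighborhood of J. -/
open Set

private lemma sqrt_cmp_eq {s q D : ℝ} (hs : 0 < s) (hq : 0 < q) (h : q^2*s = D) :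
    q / Real.sqrt D = (Real.sqrt s)⁻¹ := by
  have h1 : Real.sqrt D = q * Real.sqrt s := by
    rw [← h, Real.sqrt_mul (sq_nonneg q), Real.sqrt_sq hq.le]
  have hss : 0 < Real.sqrt s := Real.sqrt_pos.2 hs
  rw [h1]
  field_simp

private lemma sqrt_cmp_lt {s q D : ℝ} (hs : 0 < s) (hq : 0 < q) (hD : 0 < D)
    (h : q^2*s < D) : q / Real.sqrt D < (Real.sqrt s)⁻¹ := by
  have hss : 0 < Real.sqrt s := Real.sqrt_pos.2 hs
  have hsD : 0 < Real.sqrt D := Real.sqrt_pos.2 hD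
  have h1 : q * Real.sqrt s < Real.sqrt D := by
    have e : q * Real.sqrt s = Real.sqrt (q^2*s) := by
      rw [Real.sqrt_mul (sq_nonneg q), Real.sqrt_sq hq.le]
    rw [e]
    exact Real.sqrt_lt_sqrt (by positivity) h
  rw [show (Real.sqrt s)⁻¹ = 1 / Real.sqrt s from (one_div _).symm,
    div_lt_div_iff₀ hsD hss]
  linarith

private lemma sqrt_cmp_lt' {s q D : ℝ} (hs : 0 < s) (hq : 0 < q) (hD : 0 < D)
    (h : D < q^2*s) : (Real.sqrt s)⁻¹ < q / Real.sqrt D := by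
  have hss : 0 < Real.sqrt s := Real.sqrt_pos.2 hs
  have hsD : 0 < Real.sqrt D := Real.sqrt_pos.2 hD
  have h1 : Real.sqrt D < q * Real.sqrt s := by
    have e : q * Real.sqrt s = Real.sqrt (q^2*s) := by
      rw [Real.sqrt_mul (sq_nonneg q), Real.sqrt_sq hq.le]
    rw [e]
    exact Real.sqrt_lt_sqrt hD.le h
  rw [show (Real.sqrt s)⁻¹ = 1 / Real.sqrt s from (one_div _).symm,
    div_lt_div_iff₀ hss hsD]
  linarith

set_option maxHeartbeats 1000000 in
/-- Cross-ratio expansion for maps with nonpositive Schwarzian derivative. -/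
lemma koebe_core (f f1 f2 f3 : ℝ → ℝ) (x₁ a b x₂ : ℝ)
    (h1 : x₁ < a) (h2 : a < b) (h3 : b < x₂)
    (hc : ContinuousOn f (Set.Icc x₁ x₂))
    (hd : ∀ x ∈ Set.Ioo x₁ x₂, HasDerivAt f (f1 x) x)
    (hd2 : ∀ x ∈ Set.Ioo x₁ x₂, HasDerivAt f1 (f2 x) x)
    (hd3 : ∀ x ∈ Set.Ioo x₁ x₂, HasDerivAt f2 (f3 x) x)
    (hpos : ∀ x ∈ Set.Ioo x₁ x₂, 0 < f1 x)
    (hS : ∀ x ∈ Set.Ioo x₁ x₂, f3 x / f1 x - 3/2 * (f2 x / f1 x)^2 ≤ 0) :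
    (b-a)*(x₂-x₁)*((f a - f x₁)*(f x₂ - f b)) ≤
      (a-x₁)*(x₂-b)*((f b - f a)*(f x₂ - f x₁)) := by
  have hx12 : x₁ < x₂ := h1.trans (h2.trans h3)
  have hmono : StrictMonoOn f (Set.Icc x₁ x₂) := by
    apply strictMonoOn_of_deriv_pos (convex_Icc _ _) hc
    intro x hx
    rw [interior_Icc] at hx
    rw [(hd x hx).deriv]
    exact hpos x hx
  have hax : a ∈ Set.Icc x₁ x₂ := ⟨h1.le, (h2.trans h3).le⟩
  have hbx : b ∈ Set.Icc x₁ x₂ := ⟨(h1.trans h2).le, h3.le⟩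
  have hx1m : x₁ ∈ Set.Icc x₁ x₂ := ⟨le_rfl, hx12.le⟩
  have hx2m : x₂ ∈ Set.Icc x₁ x₂ := ⟨hx12.le, le_rfl⟩
  set y1 := f x₁ with hy1
  set y2 := f a with hy2
  set yb := f b with hyb
  set y3 := f x₂ with hy3
  have h12 : y1 < y2 := hmono hx1m hax h1
  have h2b : y2 < yb := hmono hax hbx h2
  have hb3 : yb < y3 := hmono hbx hx2m h3
  set lam := y2 - y1 with hlam
  set mu := y3 - y2 with hmu
  set A := a - x₁ with hA
  set B := x₂ - a with hB
  have hlam0 : 0 < lam := sub_pos.2 h12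
  have hmu0 : 0 < mu := sub_pos.2 (h2b.trans hb3)
  have hA0 : 0 < A := sub_pos.2 h1
  have hB0 : 0 < B := sub_pos.2 (h2.trans h3)
  set Q : ℝ → ℝ := fun x => mu*A*(x₂ - x) + lam*B*(x - x₁) with hQ
  set P : ℝ → ℝ := fun x => y1*(mu*A*(x₂ - x)) + y3*(lam*B*(x - x₁)) with hP
  have hQpos : ∀ x ∈ Set.Icc x₁ x₂, 0 < Q x := by
    intro x hx
    rcases lt_or_ge x x₂ with h | h
    · have ha1 := mul_pos (mul_pos hmu0 hA0) (sub_pos.2 h)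
      have ha2 := mul_nonneg (mul_nonneg hlam0.le hB0.le) (sub_nonneg.2 hx.1)
      simp only [hQ]; nlinarith
    · have hxx : 0 < x - x₁ := by linarith
      have ha1 := mul_pos (mul_pos hlam0 hB0) hxx
      have ha2 := mul_nonneg (mul_nonneg hmu0.le hA0.le) (sub_nonneg.2 hx.2)
      simp only [hQ]; nlinarith
  set detN : ℝ := lam*mu*A*B*(y3-y1)*(x₂-x₁) with hdet
  have hy31 : 0 < y3 - y1 := by linarith
  have hdet0 : 0 < detN := by
    simp only [hdet]
    exact mul_pos (mul_pos (mul_pos (mul_pos (mul_pos hlam0 hmu0) hA0) hB0) hy31)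
      (sub_pos.2 hx12)
  set q1 : ℝ := lam*B - mu*A with hq1
  have hQder : ∀ x : ℝ, HasDerivAt Q q1 x := by
    intro x
    have ha1 : HasDerivAt (fun x : ℝ => x₂ - x) (-1) x := by
      simpa using (hasDerivAt_id x).const_sub x₂
    have ha2 : HasDerivAt (fun x : ℝ => x - x₁) (1 : ℝ) x := (hasDerivAt_id x).sub_const x₁
    have := (ha1.const_mul (mu*A)).add (ha2.const_mul (lam*B))
    refine this.congr_deriv ?_
    simp only [hq1]; ring
  have hPder : ∀ x : ℝ, HasDerivAt P (y3*(lam*B) - y1*(mu*A)) x := by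
    intro x
    have ha1 : HasDerivAt (fun x : ℝ => x₂ - x) (-1) x := by
      simpa using (hasDerivAt_id x).const_sub x₂
    have ha2 : HasDerivAt (fun x : ℝ => x - x₁) (1 : ℝ) x := (hasDerivAt_id x).sub_const x₁
    have := ((ha1.const_mul (mu*A)).const_mul y1).add ((ha2.const_mul (lam*B)).const_mul y3)
    refine this.congr_deriv ?_
    ring
  set N : ℝ → ℝ := fun x => P x / Q x with hNdef
  have hNder : ∀ x ∈ Set.Icc x₁ x₂, HasDerivAt N (detN / (Q x)^2) x := by
    intro x hx
    have hQx := hQpos x hx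
    have := (hPder x).div (hQder x) hQx.ne'
    refine this.congr_deriv ?_
    rw [div_eq_div_iff (by positivity) (by positivity)]
    simp only [hdet, hQ, hq1, hlam, hmu, hA, hB]
    ring
  have hNcont : ContinuousOn N (Set.Icc x₁ x₂) :=
    fun x hx => ((hNder x hx).continuousAt).continuousWithinAt
  have hNx1 : N x₁ = y1 := by
    simp only [hNdef, hP, hQ]
    rw [div_eq_iff (hQpos x₁ hx1m).ne']
    ring
  have hNa : N a = y2 := by
    simp only [hNdef, hP, hQ]
    rw [div_eq_iff (hQpos a hax).ne']
    simp only [hlam, hmu, hA, hB]; ring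
  have hNx2 : N x₂ = y3 := by
    simp only [hNdef, hP, hQ]
    rw [div_eq_iff (hQpos x₂ hx2m).ne']
    ring
  -- the functions u = (sqrt f1)⁻¹ and its derivatives
  set u : ℝ → ℝ := fun x => (Real.sqrt (f1 x))⁻¹ with hu
  set u1 : ℝ → ℝ := fun x => -(2⁻¹) * f2 x * (f1 x)⁻¹ * (Real.sqrt (f1 x))⁻¹ with hu1
  set u2 : ℝ → ℝ := fun x =>
    -(2⁻¹) * (Real.sqrt (f1 x))⁻¹ * (f3 x / f1 x - 3/2 * (f2 x / f1 x)^2) with hu2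
  have hud : ∀ x ∈ Set.Ioo x₁ x₂, HasDerivAt u (u1 x) x := by
    intro x hx
    have hf1 := hpos x hx
    have hs : 0 < Real.sqrt (f1 x) := Real.sqrt_pos.2 hf1
    have hsq : Real.sqrt (f1 x) ^ 2 = f1 x := Real.sq_sqrt hf1.le
    have ha1 : HasDerivAt (fun y => Real.sqrt (f1 y)) (f2 x / (2 * Real.sqrt (f1 x))) x :=
      (hd2 x hx).sqrt hf1.ne'
    have ha2 := ha1.inv hs.ne'
    have heq : -(f2 x / (2 * Real.sqrt (f1 x))) / Real.sqrt (f1 x) ^ 2 = u1 x := by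
      rw [hsq]
      simp only [hu1]
      field_simp [hf1.ne', hs.ne']
      try ring
      try exact Or.inl trivial
    exact heq ▸ ha2
  have hu1d : ∀ x ∈ Set.Ioo x₁ x₂, HasDerivAt u1 (u2 x) x := by
    intro x hx
    have hf1 := hpos x hx
    have hs : 0 < Real.sqrt (f1 x) := Real.sqrt_pos.2 hf1
    have hsq : Real.sqrt (f1 x) ^ 2 = f1 x := Real.sq_sqrt hf1.le
    have ha1 : HasDerivAt (fun y => Real.sqrt (f1 y)) (f2 x / (2 * Real.sqrt (f1 x))) x :=
      (hd2 x hx).sqrt hf1.ne'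
    have hsi := ha1.inv hs.ne'
    have hfi := (hd2 x hx).inv hf1.ne'
    have e1 : HasDerivAt (fun y => -(2⁻¹ : ℝ) * f2 y) (-(2⁻¹ : ℝ) * f3 x) x :=
      (hd3 x hx).const_mul _
    have e2 := e1.mul hfi
    have e3 := e2.mul hsi
    have hde : ((-(2⁻¹ : ℝ) * f3 x) * (f1 x)⁻¹ + (-(2⁻¹ : ℝ) * f2 x) * (-(f2 x) / (f1 x)^2))
            * (Real.sqrt (f1 x))⁻¹
          + ((-(2⁻¹ : ℝ) * f2 x) * (f1 x)⁻¹) * (-(f2 x / (2 * Real.sqrt (f1 x))) / (Real.sqrt (f1 x))^2)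
        = u2 x := by
      simp only [hu2]
      rw [← hsq]
      field_simp [hs.ne']
      rw [Real.sq_sqrt (sq_nonneg (Real.sqrt (f1 x)))]
      try ring
      try exact Or.inl trivial
    exact hde ▸ (e2.mul hsi)
  have hu2nn : ∀ x ∈ Set.Ioo x₁ x₂, 0 ≤ u2 x := by
    intro x hx
    have hf1 := hpos x hx
    have hs : 0 < Real.sqrt (f1 x) := Real.sqrt_pos.2 hf1
    have hSx := hS x hx
    simp only [hu2]
    have h' : 0 ≤ -(f3 x / f1 x - 3/2 * (f2 x / f1 x)^2) := by linarith
    calc (0:ℝ) ≤ (2⁻¹) * (Real.sqrt (f1 x))⁻¹ * -(f3 x / f1 x - 3/2 * (f2 x / f1 x)^2) := by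
          positivity
      _ = -(2⁻¹) * (Real.sqrt (f1 x))⁻¹ * (f3 x / f1 x - 3/2 * (f2 x / f1 x)^2) := by ring
  set uN : ℝ → ℝ := fun x => Q x / Real.sqrt detN with huN
  -- main claim : N b ≤ f b
  have hkey : N b ≤ yb := by
    by_contra hcon
    push_neg at hcon
    set δ : ℝ → ℝ := fun y => f y - N y with hδ
    have hδder : ∀ x ∈ Set.Ioo x₁ x₂, HasDerivAt δ (f1 x - detN/(Q x)^2) x :=
      fun x hx => (hd x hx).sub (hNder x (Set.Ioo_subset_Icc_self hx))
    have hδcont : ContinuousOn δ (Set.Icc x₁ x₂) := hc.sub hNcont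
    have hδx1 : δ x₁ = 0 := by simp [hδ, hNx1, hy1]
    have hδa : δ a = 0 := by simp [hδ, hNa, hy2]
    have hδx2 : δ x₂ = 0 := by simp [hδ, hNx2, hy3]
    have hδb : δ b < 0 := by simp only [hδ]; linarith
    -- three MVT points for δ
    obtain ⟨ξ₁, hξ₁m, hξ₁⟩ := exists_hasDerivAt_eq_slope δ (fun x => f1 x - detN/(Q x)^2) h1
      (hδcont.mono (Set.Icc_subset_Icc le_rfl (h2.trans h3).le))
      (fun x hx => hδder x ⟨hx.1, hx.2.trans (h2.trans h3)⟩)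
    obtain ⟨ξ₂, hξ₂m, hξ₂⟩ := exists_hasDerivAt_eq_slope δ (fun x => f1 x - detN/(Q x)^2) h2
      (hδcont.mono (Set.Icc_subset_Icc h1.le h3.le))
      (fun x hx => hδder x ⟨h1.trans hx.1, hx.2.trans h3⟩)
    obtain ⟨ξ₃, hξ₃m, hξ₃⟩ := exists_hasDerivAt_eq_slope δ (fun x => f1 x - detN/(Q x)^2) h3
      (hδcont.mono (Set.Icc_subset_Icc (h1.trans h2).le le_rfl))
      (fun x hx => hδder x ⟨(h1.trans h2).trans hx.1, hx.2⟩)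
    rw [hδa, hδx1] at hξ₁
    rw [hδa] at hξ₂
    rw [hδx2] at hξ₃
    have hξ₁v : f1 ξ₁ - detN/(Q ξ₁)^2 = 0 := by rw [hξ₁]; simp
    have hξ₂v : f1 ξ₂ - detN/(Q ξ₂)^2 < 0 := by
      rw [hξ₂]
      apply div_neg_of_neg_of_pos (by linarith) (by linarith)
    have hξ₃v : 0 < f1 ξ₃ - detN/(Q ξ₃)^2 := by
      rw [hξ₃]
      apply div_pos (by linarith) (by linarith)
    have hξ₁I : ξ₁ ∈ Set.Ioo x₁ x₂ := ⟨hξ₁m.1, by linarith [hξ₁m.2, h2, h3]⟩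
    have hξ₂I : ξ₂ ∈ Set.Ioo x₁ x₂ := ⟨by linarith [hξ₂m.1], by linarith [hξ₂m.2]⟩
    have hξ₃I : ξ₃ ∈ Set.Ioo x₁ x₂ := ⟨by linarith [hξ₃m.1], hξ₃m.2⟩
    -- translate to u vs uN
    have hw₁ : u ξ₁ - uN ξ₁ = 0 := by
      have hQx := hQpos ξ₁ (Set.Ioo_subset_Icc_self hξ₁I)
      have hf1 := hpos ξ₁ hξ₁I
      have : (Q ξ₁)^2 * f1 ξ₁ = detN := by
        have h2ne : ((Q ξ₁)^2) ≠ 0 := by positivity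
        have he : f1 ξ₁ = detN/(Q ξ₁)^2 := by linarith
        rw [he, mul_comm, div_mul_cancel₀ _ h2ne]
      rw [sub_eq_zero]
      simp only [hu, huN]
      exact (sqrt_cmp_eq hf1 hQx this).symm
    have hw₂ : 0 < u ξ₂ - uN ξ₂ := by
      have hQx := hQpos ξ₂ (Set.Ioo_subset_Icc_self hξ₂I)
      have hf1 := hpos ξ₂ hξ₂I
      have hlt : (Q ξ₂)^2 * f1 ξ₂ < detN := by
        have : f1 ξ₂ < detN/(Q ξ₂)^2 := by linarith
        have h2ne : ((Q ξ₂)^2) ≠ 0 := by positivity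
        calc (Q ξ₂)^2 * f1 ξ₂ < (Q ξ₂)^2 * (detN/(Q ξ₂)^2) :=
              mul_lt_mul_of_pos_left this (by positivity)
          _ = detN := by rw [mul_comm, div_mul_cancel₀ _ h2ne]
      have := sqrt_cmp_lt hf1 hQx hdet0 hlt
      simp only [hu, huN]
      linarith
    have hw₃ : u ξ₃ - uN ξ₃ < 0 := by
      have hQx := hQpos ξ₃ (Set.Ioo_subset_Icc_self hξ₃I)
      have hf1 := hpos ξ₃ hξ₃I
      have hlt : detN < (Q ξ₃)^2 * f1 ξ₃ := by
        have : detN/(Q ξ₃)^2 < f1 ξ₃ := by linarith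
        have h2ne : ((Q ξ₃)^2) ≠ 0 := by positivity
        calc detN = (Q ξ₃)^2 * (detN/(Q ξ₃)^2) := by rw [mul_comm, div_mul_cancel₀ _ h2ne]
          _ < (Q ξ₃)^2 * f1 ξ₃ := mul_lt_mul_of_pos_left this (by positivity)
      have := sqrt_cmp_lt' hf1 hQx hdet0 hlt
      simp only [hu, huN]
      linarith
    -- w and its derivatives
    set w : ℝ → ℝ := fun x => u x - uN x with hw
    set w1 : ℝ → ℝ := fun x => u1 x - q1 / Real.sqrt detN with hw1
    have hwd : ∀ x ∈ Set.Ioo x₁ x₂, HasDerivAt w (w1 x) x := by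
      intro x hx
      exact (hud x hx).sub ((hQder x).div_const _)
    have hw1d : ∀ x ∈ Set.Ioo x₁ x₂, HasDerivAt w1 (u2 x) x := by
      intro x hx
      exact (hu1d x hx).sub_const _
    have hsub12 : Set.Icc ξ₁ ξ₂ ⊆ Set.Ioo x₁ x₂ := fun x hx =>
      ⟨lt_of_lt_of_le hξ₁I.1 hx.1, lt_of_le_of_lt hx.2 hξ₂I.2⟩
    have hsub23 : Set.Icc ξ₂ ξ₃ ⊆ Set.Ioo x₁ x₂ := fun x hx =>
      ⟨lt_of_lt_of_le hξ₂I.1 hx.1, lt_of_le_of_lt hx.2 hξ₃I.2⟩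
    have hξ12 : ξ₁ < ξ₂ := lt_trans hξ₁m.2 hξ₂m.1
    have hξ23 : ξ₂ < ξ₃ := lt_trans hξ₂m.2 hξ₃m.1
    obtain ⟨η₁, hη₁m, hη₁⟩ := exists_hasDerivAt_eq_slope w w1 hξ12
      (fun x hx => ((hwd x (hsub12 hx)).continuousAt).continuousWithinAt)
      (fun x hx => hwd x (hsub12 (Set.Ioo_subset_Icc_self hx)))
    obtain ⟨η₂, hη₂m, hη₂⟩ := exists_hasDerivAt_eq_slope w w1 hξ23
      (fun x hx => ((hwd x (hsub23 hx)).continuousAt).continuousWithinAt)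
      (fun x hx => hwd x (hsub23 (Set.Ioo_subset_Icc_self hx)))
    have hwξ₁ : w ξ₁ = 0 := hw₁
    have hwξ₂ : 0 < w ξ₂ := hw₂
    have hwξ₃ : w ξ₃ < 0 := hw₃
    have hη₁v : 0 < w1 η₁ := by
      rw [hη₁, hwξ₁]
      apply div_pos (by linarith) (by linarith [hη₁m.1, hη₁m.2])
    have hη₂v : w1 η₂ < 0 := by
      rw [hη₂]
      apply div_neg_of_neg_of_pos (by linarith) (by linarith)
    have hη12 : η₁ < η₂ := lt_trans hη₁m.2 hη₂m.1
    have hη₁I : η₁ ∈ Set.Ioo x₁ x₂ := hsub12 (Set.Ioo_subset_Icc_self hη₁m)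
    have hη₂I : η₂ ∈ Set.Ioo x₁ x₂ := hsub23 (Set.Ioo_subset_Icc_self hη₂m)
    have hsubη : Set.Icc η₁ η₂ ⊆ Set.Ioo x₁ x₂ := fun x hx =>
      ⟨lt_of_lt_of_le hη₁I.1 hx.1, lt_of_le_of_lt hx.2 hη₂I.2⟩
    obtain ⟨ζ, hζm, hζ⟩ := exists_hasDerivAt_eq_slope w1 u2 hη12
      (fun x hx => ((hw1d x (hsubη hx)).continuousAt).continuousWithinAt)
      (fun x hx => hw1d x (hsubη (Set.Ioo_subset_Icc_self hx)))
    have : u2 ζ < 0 := by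
      rw [hζ]
      apply div_neg_of_neg_of_pos (by linarith) (by linarith)
    exact absurd (hu2nn ζ (hsubη (Set.Ioo_subset_Icc_self hζm))) (by linarith)
  -- final algebra
  have hQb := hQpos b hbx
  have hPb : P b ≤ yb * Q b := by
    have := hkey
    simp only [hNdef] at this
    calc P b = (P b / Q b) * Q b := by rw [div_mul_cancel₀ _ hQb.ne']
      _ ≤ yb * Q b := mul_le_mul_of_nonneg_right this hQb.le
  have hid : (b-a)*(x₂-x₁)*lam*(y3*Q b - P b) = A*(x₂-b)*((P b - y2*Q b)*(y3-y1)) := by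
    simp only [hP, hQ, hlam, hmu, hA, hB]
    ring
  have hstep1 : (b-a)*(x₂-x₁)*(lam*(y3-yb)) * Q b ≤ (b-a)*(x₂-x₁)*lam*(y3*Q b - P b) := by
    have hco : 0 ≤ (b-a)*(x₂-x₁)*lam :=
      mul_nonneg (mul_nonneg (by linarith) (by linarith)) hlam0.le
    nlinarith [mul_le_mul_of_nonneg_left (sub_nonneg.2 hPb) hco]
  have hstep2 : A*(x₂-b)*((P b - y2*Q b)*(y3-y1)) ≤ A*(x₂-b)*((yb-y2)*(y3-y1)) * Q b := by
    have hco : 0 ≤ A*(x₂-b)*(y3-y1) :=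
      mul_nonneg (mul_nonneg hA0.le (by linarith)) hy31.le
    linarith [mul_le_mul_of_nonneg_left (sub_nonneg.2 hPb) hco]
  have hfin : (b-a)*(x₂-x₁)*(lam*(y3-yb)) * Q b ≤ A*(x₂-b)*((yb-y2)*(y3-y1)) * Q b := by
    calc (b-a)*(x₂-x₁)*(lam*(y3-yb)) * Q b ≤ (b-a)*(x₂-x₁)*lam*(y3*Q b - P b) := hstep1
      _ = A*(x₂-b)*((P b - y2*Q b)*(y3-y1)) := hid
      _ ≤ A*(x₂-b)*((yb-y2)*(y3-y1)) * Q b := hstep2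
  exact le_of_mul_le_mul_right hfin hQb

private lemma collar_num {η t L K : ℝ} (hη : 0 < η) (hL : 0 < L) (ht : 0 < t)
    (hK : K = 1/2*η^3*(2+η)⁻¹^2) (h : η^2 * t ≤ (1+2*η) * L) : K * t ≤ L := by
  have h2 : (0:ℝ) < 2 + η := by linarith
  have h12 : (0:ℝ) < 1 + 2*η := by linarith
  have e : K = η^3/(2*(2+η)^2) := by rw [hK]; field_simp
  have key : K ≤ η^2 / (1+2*η) := by
    rw [e, div_le_div_iff₀ (by positivity) h12]
    nlinarith [mul_pos hη hη, mul_pos (mul_pos hη hη) hη]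
  calc K*t ≤ (η^2/(1+2*η))*t := mul_le_mul_of_nonneg_right key ht.le
    _ ≤ L := by
        rw [div_mul_eq_mul_div, div_le_iff₀ h12]
        nlinarith [h]

private lemma collar_aux (f f1 f2 f3 : ℝ → ℝ) (x₁ a b x₂ η D K : ℝ)
    (hη : 0 < η) (hD : 0 < D) (hK : K = 1/2*η^3*(2+η)⁻¹^2)
    (h1 : x₁ < a) (h2 : a < b) (h3 : b < x₂)
    (hc : ContinuousOn f (Set.Icc x₁ x₂))
    (hd : ∀ x ∈ Set.Ioo x₁ x₂, HasDerivAt f (f1 x) x)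
    (hd2 : ∀ x ∈ Set.Ioo x₁ x₂, HasDerivAt f1 (f2 x) x)
    (hd3 : ∀ x ∈ Set.Ioo x₁ x₂, HasDerivAt f2 (f3 x) x)
    (hpos : ∀ x ∈ Set.Ioo x₁ x₂, 0 < f1 x)
    (hS : ∀ x ∈ Set.Ioo x₁ x₂, f3 x / f1 x - 3/2 * (f2 x / f1 x)^2 ≤ 0)
    (v1 : f a - f x₁ = η * D) (v2 : f b - f a = D) (v3 : f x₂ - f b = η * D) :
    K * (b - a) ≤ a - x₁ ∧ K * (b - a) ≤ x₂ - b := by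
  have hcr := koebe_core f f1 f2 f3 x₁ a b x₂ h1 h2 h3 hc hd hd2 hd3 hpos hS
  have v4 : f x₂ - f x₁ = (1+2*η) * D := by linarith
  rw [v1, v2, v3, v4] at hcr
  have hba : 0 < b - a := by linarith
  have hax : 0 < a - x₁ := by linarith
  have hxb : 0 < x₂ - b := by linarith
  have hc0 : (0:ℝ) ≤ (η*D)*(η*D) := by positivity
  have hleft : η^2*(b-a) ≤ (1+2*η)*(a-x₁) := by
    have h5 : (b-a)*(x₂-b)*((η*D)*(η*D)) ≤ (b-a)*(x₂-x₁)*((η*D)*(η*D)) := by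
      nlinarith [mul_le_mul_of_nonneg_right
        (mul_le_mul_of_nonneg_left (show x₂-b ≤ x₂-x₁ by linarith) hba.le) hc0]
    have hchain := le_trans h5 hcr
    have : (η^2*(b-a)) * ((x₂-b)*(D*D)) ≤ ((1+2*η)*(a-x₁)) * ((x₂-b)*(D*D)) := by
      calc (η^2*(b-a)) * ((x₂-b)*(D*D)) = (b-a)*(x₂-b)*((η*D)*(η*D)) := by ring
        _ ≤ (a-x₁)*(x₂-b)*(D*((1+2*η)*D)) := hchain
        _ = ((1+2*η)*(a-x₁)) * ((x₂-b)*(D*D)) := by ring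
    exact le_of_mul_le_mul_right this (by positivity)
  have hright : η^2*(b-a) ≤ (1+2*η)*(x₂-b) := by
    have h5 : (b-a)*(a-x₁)*((η*D)*(η*D)) ≤ (b-a)*(x₂-x₁)*((η*D)*(η*D)) := by
      nlinarith [mul_le_mul_of_nonneg_right
        (mul_le_mul_of_nonneg_left (show a-x₁ ≤ x₂-x₁ by linarith) hba.le) hc0]
    have hchain := le_trans h5 hcr
    have : (η^2*(b-a)) * ((a-x₁)*(D*D)) ≤ ((1+2*η)*(x₂-b)) * ((a-x₁)*(D*D)) := by
      calc (η^2*(b-a)) * ((a-x₁)*(D*D)) = (b-a)*(a-x₁)*((η*D)*(η*D)) := by ring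
        _ ≤ (a-x₁)*(x₂-b)*(D*((1+2*η)*D)) := hchain
        _ = ((1+2*η)*(x₂-b)) * ((a-x₁)*(D*D)) := by ring
    exact le_of_mul_le_mul_right this (by positivity)
  exact ⟨collar_num hη hax hba hK hleft, collar_num hη hxb hba hK hright⟩

/-- If `g : Δ → ℝ` is a `C³` diffeomorphism onto its image with negative Schwarzian
derivative, `J = [a,b] ⊆ Δ` with `g(J) = [c,d]`, and `g(Δ)` contains the `η`-scaled
neighborhood of `g(J)`, then `Δ` contains the `(½η³(2+η)⁻²)`-scaled neighborhood of `J`. -/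
theorem koebe_collar (g : ℝ → ℝ) (Δ : Set ℝ) (η : ℝ) (hη : 0 < η)
    (hΔ : Δ.OrdConnected) (hΔu : UniqueDiffOn ℝ Δ)
    (hg : ContDiffOn ℝ 3 g Δ) (hinj : Set.InjOn g Δ)
    (hg' : ∀ x ∈ Δ, derivWithin g Δ x ≠ 0)
    (hS : ∀ x ∈ Δ, SchwarzianWithin g Δ x < 0)
    (a b : ℝ) (hab : a ≤ b) (hJ : Set.Icc a b ⊆ Δ)
    (c d : ℝ) (hcd : g '' Set.Icc a b = Set.Icc c d)
    (hN : Set.Icc (c - η * (d - c)) (d + η * (d - c)) ⊆ g '' Δ) :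
    Set.Icc (a - (1 / 2 * η ^ 3 * (2 + η)⁻¹ ^ 2) * (b - a))
        (b + (1 / 2 * η ^ 3 * (2 + η)⁻¹ ^ 2) * (b - a)) ⊆ Δ := by
  rcases eq_or_lt_of_le hab with rfl | hlt
  · simpa using hJ
  set K := 1 / 2 * η ^ 3 * (2 + η)⁻¹ ^ 2 with hK
  have haΔ : a ∈ Δ := hJ ⟨le_rfl, hab⟩
  have hbΔ : b ∈ Δ := hJ ⟨hab, le_rfl⟩
  have hconv : Convex ℝ Δ := hΔ.convex
  set O := interior Δ with hOdef
  have hOopen : IsOpen O := isOpen_interior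
  have hdW : ∀ x ∈ O, derivWithin g Δ x = deriv g x := fun x hx =>
    derivWithin_of_mem_nhds (mem_interior_iff_mem_nhds.1 hx)
  have hiD : ∀ (n : ℕ) (x : ℝ), x ∈ O → iteratedDerivWithin n g Δ x = iteratedDeriv n g x := by
    intro n x hx
    rw [iteratedDerivWithin, iteratedDeriv,
      ← iteratedFDerivWithin_inter (hOopen.mem_nhds hx) (s := Δ),
      inter_eq_self_of_subset_right interior_subset,
      iteratedFDerivWithin_of_isOpen n hOopen hx]
  have hg1c : ContinuousOn (derivWithin g Δ) Δ :=
    hg.continuousOn_derivWithin hΔu (by norm_num)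
  have hsign : (∀ x ∈ Δ, 0 < derivWithin g Δ x) ∨ (∀ x ∈ Δ, derivWithin g Δ x < 0) := by
    by_contra hcon
    push_neg at hcon
    obtain ⟨⟨p, hp, hple⟩, ⟨q, hq, hqge⟩⟩ := hcon
    have hpre : IsPreconnected Δ := hconv.isPreconnected
    obtain ⟨z, hz, hz0⟩ := hpre.intermediate_value₂ hp hq hg1c
      (continuousOn_const (c := (0:ℝ))) hple hqge
    exact hg' z hz hz0
  have hgO : ContDiffOn ℝ 3 g O := hg.mono interior_subset
  have hg1O : ContDiffOn ℝ 2 (deriv g) O := hgO.deriv_of_isOpen hOopen (by norm_num)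
  have hg2O : ContDiffOn ℝ 1 (deriv (deriv g)) O := hg1O.deriv_of_isOpen hOopen (by norm_num)
  have hDg : ∀ x ∈ O, HasDerivAt g (deriv g x) x := fun x hx =>
    ((hgO.differentiableOn (by norm_num)).differentiableAt (hOopen.mem_nhds hx)).hasDerivAt
  have hDg1 : ∀ x ∈ O, HasDerivAt (deriv g) (deriv (deriv g) x) x := fun x hx =>
    ((hg1O.differentiableOn (by norm_num)).differentiableAt (hOopen.mem_nhds hx)).hasDerivAt
  have hDg2 : ∀ x ∈ O, HasDerivAt (deriv (deriv g)) (deriv (deriv (deriv g)) x) x := fun x hx =>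
    ((hg2O.differentiableOn (by norm_num)).differentiableAt (hOopen.mem_nhds hx)).hasDerivAt
  have hSx : ∀ x ∈ O, deriv (deriv (deriv g)) x / deriv g x
      - 3/2 * (deriv (deriv g) x / deriv g x)^2 ≤ 0 := by
    intro x hx
    have h := hS x (interior_subset hx)
    unfold SchwarzianWithin at h
    rw [hiD 3 x hx, hiD 2 x hx, hdW x hx] at h
    have e3 : iteratedDeriv 3 g = deriv (deriv (deriv g)) := by
      rw [show (3:ℕ) = 2+1 from rfl, iteratedDeriv_succ,
        show (2:ℕ) = 1+1 from rfl, iteratedDeriv_succ, iteratedDeriv_one]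
    have e2 : iteratedDeriv 2 g = deriv (deriv g) := by
      rw [show (2:ℕ) = 1+1 from rfl, iteratedDeriv_succ, iteratedDeriv_one]
    rw [e3, e2] at h
    linarith
  have hgaI : g a ∈ Set.Icc c d := by rw [← hcd]; exact Set.mem_image_of_mem g ⟨le_rfl, hab⟩
  have hgbI : g b ∈ Set.Icc c d := by rw [← hcd]; exact Set.mem_image_of_mem g ⟨hab, le_rfl⟩
  have hcd' : c ≤ d := hgaI.1.trans hgaI.2
  obtain ⟨tc, htcJ, hgtc⟩ : c ∈ g '' Set.Icc a b := by rw [hcd]; exact ⟨le_rfl, hcd'⟩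
  obtain ⟨td, htdJ, hgtd⟩ : d ∈ g '' Set.Icc a b := by rw [hcd]; exact ⟨hcd', le_rfl⟩
  rcases hsign with hpos | hneg
  · -- increasing case
    have hmono : StrictMonoOn g Δ := by
      apply strictMonoOn_of_deriv_pos hconv hg.continuousOn
      intro x hx
      rw [← hdW x hx]
      exact hpos x (interior_subset hx)
    have hc' : c = g a :=
      le_antisymm hgaI.1 (by rw [← hgtc]; exact hmono.monotoneOn haΔ (hJ htcJ) htcJ.1)
    have hd' : d = g b :=
      le_antisymm (by rw [← hgtd]; exact hmono.monotoneOn (hJ htdJ) hbΔ htdJ.2) hgbI.2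
    have hDpos : 0 < d - c := by
      have := hmono haΔ hbΔ hlt
      rw [hc', hd']; linarith
    obtain ⟨x₁, hx₁Δ, hgx₁⟩ := hN ⟨le_rfl, by nlinarith⟩
    obtain ⟨x₂, hx₂Δ, hgx₂⟩ := hN ⟨by nlinarith, le_rfl⟩
    have hx₁a : x₁ < a := by
      have hval : g x₁ < g a := by rw [hgx₁, ← hc']; nlinarith
      by_contra hnot
      push_neg at hnot
      have := hmono.monotoneOn haΔ hx₁Δ hnot
      linarith
    have hbx₂ : b < x₂ := by
      have hval : g b < g x₂ := by rw [hgx₂, ← hd']; nlinarith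
      by_contra hnot
      push_neg at hnot
      have := hmono.monotoneOn hx₂Δ hbΔ hnot
      linarith
    have hIcc : Set.Icc x₁ x₂ ⊆ Δ := hΔ.out hx₁Δ hx₂Δ
    have hIoo : Set.Ioo x₁ x₂ ⊆ O :=
      interior_maximal (fun x hx => hIcc (Set.Ioo_subset_Icc_self hx)) isOpen_Ioo
    have haux := collar_aux g (deriv g) (deriv (deriv g)) (deriv (deriv (deriv g)))
      x₁ a b x₂ η (d - c) K hη hDpos hK hx₁a hlt hbx₂
      (hg.continuousOn.mono hIcc)
      (fun x hx => hDg x (hIoo hx)) (fun x hx => hDg1 x (hIoo hx))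
      (fun x hx => hDg2 x (hIoo hx))
      (fun x hx => by
        rw [← hdW x (hIoo hx)]
        exact hpos x (hIcc (Set.Ioo_subset_Icc_self hx)))
      (fun x hx => hSx x (hIoo hx))
      (by rw [hgx₁, hc']; ring) (by rw [hd', hc']) (by rw [hgx₂, hd']; ring)
    obtain ⟨hL, hR⟩ := haux
    intro z hz
    exact hIcc ⟨by linarith [hz.1], by linarith [hz.2]⟩
  · -- decreasing case
    have hanti : StrictAntiOn g Δ := by
      apply strictAntiOn_of_deriv_neg hconv hg.continuousOn
      intro x hx
      rw [← hdW x hx]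
      exact hneg x (interior_subset hx)
    have hc' : c = g b :=
      le_antisymm hgbI.1 (by rw [← hgtc]; exact hanti.antitoneOn (hJ htcJ) hbΔ htcJ.2)
    have hd' : d = g a :=
      le_antisymm (by rw [← hgtd]; exact hanti.antitoneOn haΔ (hJ htdJ) htdJ.1) hgaI.2
    have hDpos : 0 < d - c := by
      have := hanti haΔ hbΔ hlt
      rw [hc', hd']; linarith
    obtain ⟨x₁, hx₁Δ, hgx₁⟩ := hN ⟨by nlinarith, le_rfl⟩
    obtain ⟨x₂, hx₂Δ, hgx₂⟩ := hN ⟨le_rfl, by nlinarith⟩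
    have hx₁a : x₁ < a := by
      have hval : g a < g x₁ := by rw [hgx₁, hd']; nlinarith
      by_contra hnot
      push_neg at hnot
      have := hanti.antitoneOn haΔ hx₁Δ hnot
      linarith
    have hbx₂ : b < x₂ := by
      have hval : g x₂ < g b := by rw [hgx₂, hc']; nlinarith
      by_contra hnot
      push_neg at hnot
      have := hanti.antitoneOn hx₂Δ hbΔ hnot
      linarith
    have hIcc : Set.Icc x₁ x₂ ⊆ Δ := hΔ.out hx₁Δ hx₂Δ
    have hIoo : Set.Ioo x₁ x₂ ⊆ O :=
      interior_maximal (fun x hx => hIcc (Set.Ioo_subset_Icc_self hx)) isOpen_Ioo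
    have haux := collar_aux (fun x => -g x) (fun x => -deriv g x)
      (fun x => -deriv (deriv g) x) (fun x => -deriv (deriv (deriv g)) x)
      x₁ a b x₂ η (d - c) K hη hDpos hK hx₁a hlt hbx₂
      ((hg.continuousOn.mono hIcc).neg)
      (fun x hx => (hDg x (hIoo hx)).neg) (fun x hx => (hDg1 x (hIoo hx)).neg)
      (fun x hx => (hDg2 x (hIoo hx)).neg)
      (fun x hx => by
        have : derivWithin g Δ x < 0 := hneg x (hIcc (Set.Ioo_subset_Icc_self hx))
        rw [hdW x (hIoo hx)] at this
        simpa using this)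
      (fun x hx => by
        have := hSx x (hIoo hx)
        simp only [neg_div_neg_eq]
        linarith)
      (by show -g a - -g x₁ = η * (d - c); rw [hgx₁, hd']; ring)
      (by show -g b - -g a = d - c; rw [hd', hc']; ring)
      (by show -g x₂ - -g b = η * (d - c); rw [hgx₂, hc']; ring)
    obtain ⟨hL, hR⟩ := haux
    intro z hz
    exact hIcc ⟨by linarith [hz.1], by linarith [hz.2]⟩
end

section
/- Let Ω be a probability space with complete probability measure m, and X a Polish space. Then every random probability measure ν on Ω × X with marginal m is inner and outer regular with respect to closed and open random sets: for any measurable A ⊆ Ω × X, ν(A) = sup{ν(F): F ⊆ A closed random set} = inf{ν(G): G ⊇ A open random set}. -/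
open MeasureTheory Set ENNReal

private lemma exists_partial_le {α : Type*} [MeasurableSpace α] (μ : Measure α)
    [IsFiniteMeasure μ] (S : ℕ → Set α) (hmono : Monotone S) {ε : ℝ≥0∞} (hε : ε ≠ 0) :
    ∃ N, μ (⋃ n, S n) ≤ μ (S N) + ε := by
  by_cases h : μ (⋃ n, S n) ≤ ε
  · exact ⟨0, h.trans le_add_self⟩
  push_neg at h
  have hsup : μ (⋃ n, S n) = ⨆ n, μ (S n) := hmono.directed_le.measure_iUnion
  have hlt : μ (⋃ n, S n) - ε < ⨆ n, μ (S n) := by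
    rw [← hsup]
    exact ENNReal.sub_lt_self (measure_ne_top _ _) (fun h0 => by simp [h0] at h) hε
  obtain ⟨N, hN⟩ := lt_iSup_iff.1 hlt
  exact ⟨N, (ENNReal.lt_add_of_sub_lt_right (Or.inl (measure_ne_top μ _)) hN).le⟩

/-- The key approximation property: `A` can be squeezed between a set with closed fibers
and a set with open fibers, up to measure `ε`. -/
private def Approx {Ω X : Type*} [MeasurableSpace Ω] [TopologicalSpace X] [MeasurableSpace X]
    (ν : Measure (Ω × X)) (A : Set (Ω × X)) : Prop :=
  ∀ ε : ℝ≥0∞, ε ≠ 0 → ∃ F G : Set (Ω × X), MeasurableSet F ∧ MeasurableSet G ∧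
    (∀ ω : Ω, IsClosed {x : X | (ω, x) ∈ F}) ∧ (∀ ω : Ω, IsOpen {x : X | (ω, x) ∈ G}) ∧
    F ⊆ A ∧ A ⊆ G ∧ ν (G \ F) ≤ ε

private lemma approx_of_measurable {Ω X : Type*} [MeasurableSpace Ω]
    [MetricSpace X] [MeasurableSpace X] [BorelSpace X]
    (ν : Measure (Ω × X)) [IsProbabilityMeasure ν]
    (A : Set (Ω × X)) (hA : MeasurableSet A) : Approx ν A := by
  revert hA
  have hgen : (Prod.instMeasurableSpace : MeasurableSpace (Ω × X)) =
      MeasurableSpace.generateFrom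
        (image2 (· ×ˢ ·) {s : Set Ω | MeasurableSet s} {t : Set X | IsOpen t}) := by
    refine (generateFrom_eq_prod MeasurableSpace.generateFrom_measurableSet ?_
      isCountablySpanning_measurableSet ?_).symm
    · rw [BorelSpace.measurable_eq (α := X)]; rfl
    · exact ⟨fun _ => univ, fun _ => isOpen_univ, iUnion_const univ⟩
  have hpi : IsPiSystem (image2 (· ×ˢ ·) {s : Set Ω | MeasurableSet s} {t : Set X | IsOpen t}) := by
    rintro _ ⟨s₁, hs₁, t₁, ht₁, rfl⟩ _ ⟨s₂, hs₂, t₂, ht₂, rfl⟩ -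
    rw [prod_inter_prod]
    exact ⟨s₁ ∩ s₂, hs₁.inter hs₂, t₁ ∩ t₂, ht₁.inter ht₂, rfl⟩
  intro hA
  refine MeasurableSpace.induction_on_inter (C := fun A _ => Approx ν A) hgen hpi ?_ ?_ ?_ ?_ A hA
  · -- empty set
    intro ε hε
    exact ⟨∅, ∅, MeasurableSet.empty, MeasurableSet.empty, fun ω => isClosed_empty,
      fun ω => isOpen_empty, Subset.rfl, Subset.rfl, by simp⟩
  · -- rectangles s ×ˢ t with t open
    rintro _ ⟨s, hs, t, ht, rfl⟩ ε hε
    -- the marginal on X of ν restricted to s ×ˢ univ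
    set μ : Measure X := (ν.restrict (s ×ˢ univ)).map Prod.snd with hμ
    have hμval : ∀ u : Set X, MeasurableSet u → μ u = ν (s ×ˢ u) := by
      intro u hu
      rw [hμ, Measure.map_apply measurable_snd hu,
        Measure.restrict_apply (measurable_snd hu)]
      congr 1
      ext ⟨ω, x⟩
      simp [and_comm]
    have : IsFiniteMeasure μ := by
      constructor
      rw [hμ, Measure.map_apply measurable_snd MeasurableSet.univ, preimage_univ]
      exact (Measure.restrict_apply_le _ _).trans_lt (measure_lt_top ν _)
    obtain ⟨K, hKt, hKc, hK⟩ :=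
      (ht.measurableSet).exists_isClosed_lt_add (μ := μ) (measure_ne_top μ t) hε
    refine ⟨s ×ˢ K, s ×ˢ t, hs.prod hKc.measurableSet, hs.prod ht.measurableSet, ?_, ?_,
      prod_mono_right hKt, Subset.rfl, ?_⟩
    · intro ω
      by_cases hω : ω ∈ s
      · convert hKc using 1; ext x; simp [hω]
      · convert isClosed_empty using 1; ext x; simp [hω]
    · intro ω
      by_cases hω : ω ∈ s
      · have ht' : IsOpen t := ht
        convert ht' using 1; ext x; simp [hω]
      · convert isOpen_empty using 1; ext x; simp [hω]
    · have hdiff : s ×ˢ t \ s ×ˢ K = s ×ˢ (t \ K) := by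
        ext ⟨ω, x⟩
        simp only [mem_diff, mem_prod]
        tauto
      rw [hdiff, ← hμval _ ((ht.measurableSet).diff hKc.measurableSet),
        measure_diff hKt hKc.measurableSet.nullMeasurableSet (measure_ne_top μ K)]
      rw [hμval t ht.measurableSet, hμval K hKc.measurableSet] at hK ⊢
      exact tsub_le_iff_right.2 (by rw [add_comm]; exact hK.le)
  · -- complements
    rintro A hAm hA ε hε
    obtain ⟨F, G, hFm, hGm, hFc, hGo, hFA, hAG, hν⟩ := hA ε hε
    refine ⟨Gᶜ, Fᶜ, hGm.compl, hFm.compl, fun ω => ?_, fun ω => ?_,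
      compl_subset_compl.2 hAG, compl_subset_compl.2 hFA, ?_⟩
    · have : {x : X | (ω, x) ∈ Gᶜ} = {x : X | (ω, x) ∈ G}ᶜ := rfl
      rw [this]; exact (hGo ω).isClosed_compl
    · have : {x : X | (ω, x) ∈ Fᶜ} = {x : X | (ω, x) ∈ F}ᶜ := rfl
      rw [this]; exact (hFc ω).isOpen_compl
    · have : Fᶜ \ Gᶜ = G \ F := by
        ext p; simp only [mem_diff, mem_compl_iff, not_not]; tauto
      rwa [this]
  · -- countable unions
    rintro f hdisj hfm hf ε hε
    obtain ⟨δ, hδpos, hδsum⟩ := ENNReal.exists_pos_sum_of_countable' (ε := ε / 2)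
      (by simpa using hε) ℕ
    choose F G hFm hGm hFc hGo hFA hAG hν using fun n => hf n (δ n) (hδpos n).ne'
    have hε2 : (ε / 2 : ℝ≥0∞) ≠ 0 := by simpa using hε
    obtain ⟨N, hN⟩ := exists_partial_le ν (fun N => ⋃ n < N, F n)
      (fun a b hab => iUnion₂_mono' fun i hi => ⟨i, lt_of_lt_of_le hi hab, Subset.rfl⟩) hε2
    rw [show ⋃ N, ⋃ n < N, F n = ⋃ n, F n by
      ext p
      simp only [mem_iUnion]
      exact ⟨fun ⟨N, n, _, h⟩ => ⟨n, h⟩, fun ⟨n, h⟩ => ⟨n + 1, n, Nat.lt_succ_self n, h⟩⟩] at hN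
    refine ⟨⋃ n < N, F n, ⋃ n, G n, MeasurableSet.biUnion (to_countable _) fun n _ => hFm n,
      MeasurableSet.iUnion hGm, fun ω => ?_, fun ω => ?_,
      iUnion₂_subset fun n _ => (hFA n).trans (subset_iUnion f n),
      iUnion_mono hAG, ?_⟩
    · have h1 : {x : X | (ω, x) ∈ ⋃ n < N, F n}
          = ⋃ n ∈ {n : ℕ | n < N}, {x : X | (ω, x) ∈ F n} := by
        ext x; simp
      rw [h1]
      exact (Set.finite_lt_nat N).isClosed_biUnion fun n _ => hFc n ω
    · have : {x : X | (ω, x) ∈ ⋃ n, G n} = ⋃ n, {x : X | (ω, x) ∈ G n} := by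
        ext x; simp
      rw [this]
      exact isOpen_iUnion fun n => hGo n ω
    · calc ν ((⋃ n, G n) \ ⋃ n < N, F n)
          ≤ ν ((⋃ n, (G n \ F n)) ∪ ((⋃ n, F n) \ ⋃ n < N, F n)) := by
            apply measure_mono
            rintro p ⟨hpG, hpF⟩
            obtain ⟨n, hn⟩ := mem_iUnion.1 hpG
            by_cases h : p ∈ F n
            · exact Or.inr ⟨mem_iUnion.2 ⟨n, h⟩, hpF⟩
            · exact Or.inl (mem_iUnion.2 ⟨n, hn, h⟩)
        _ ≤ ν (⋃ n, (G n \ F n)) + ν ((⋃ n, F n) \ ⋃ n < N, F n) := measure_union_le _ _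
        _ ≤ (∑' n, ν (G n \ F n)) + ν ((⋃ n, F n) \ ⋃ n < N, F n) := by
            gcongr; exact measure_iUnion_le _
        _ ≤ ε / 2 + ε / 2 := by
            gcongr
            · exact le_trans (ENNReal.tsum_le_tsum fun n => hν n) hδsum.le
            · have hm : NullMeasurableSet (⋃ n < N, F n) ν :=
                (MeasurableSet.biUnion (Set.to_countable {n : ℕ | n < N})
                  fun n _ => hFm n).nullMeasurableSet
              exact (measure_diff_le_iff_le_add hm
                (iUnion₂_subset fun n _ => subset_iUnion F n) (measure_ne_top _ _)).2 hN
        _ = ε := ENNReal.add_halves ε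

/-- Every random probability measure `ν` on `Ω × X` (with `X` Polish and marginal `m`,
`m` complete) is inner regular with respect to closed random sets and outer regular with
respect to open random sets: a closed (resp. open) random set is a product-measurable
subset of `Ω × X` all of whose fibers are closed (resp. open). -/
theorem randomMeasure_regular {Ω X : Type*} [MeasurableSpace Ω]
    [MetricSpace X] [TopologicalSpace.SeparableSpace X] [CompleteSpace X]
    [MeasurableSpace X] [BorelSpace X]
    (m : Measure Ω) [IsProbabilityMeasure m] [m.IsComplete]
    (ν : Measure (Ω × X)) [IsProbabilityMeasure ν]
    (hmarg : ν.map Prod.fst = m)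
    (A : Set (Ω × X)) (hA : MeasurableSet A) :
    ν A = sSup {v : ℝ≥0∞ | ∃ F : Set (Ω × X), MeasurableSet F ∧
        (∀ ω : Ω, IsClosed {x : X | (ω, x) ∈ F}) ∧ F ⊆ A ∧ v = ν F} ∧
    ν A = sInf {v : ℝ≥0∞ | ∃ G : Set (Ω × X), MeasurableSet G ∧
        (∀ ω : Ω, IsOpen {x : X | (ω, x) ∈ G}) ∧ A ⊆ G ∧ v = ν G} := by
  have happrox := approx_of_measurable ν A hA
  constructor
  · refine le_antisymm ?_ (sSup_le ?_)
    · refine ENNReal.le_of_forall_pos_le_add fun ε hε hlt => ?_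
      obtain ⟨F, G, hFm, hGm, hFc, hGo, hFA, hAG, hν⟩ := happrox ε (by exact_mod_cast hε.ne')
      calc ν A ≤ ν G := measure_mono hAG
        _ ≤ ν (G ∩ F) + ν (G \ F) := measure_le_inter_add_diff ν G F
        _ ≤ ν F + ε := add_le_add (measure_mono inter_subset_right) hν
        _ ≤ _ + ε := by
            gcongr
            exact le_sSup ⟨F, hFm, hFc, hFA, rfl⟩
    · rintro v ⟨F, hFm, hFc, hFA, rfl⟩
      exact measure_mono hFA
  · refine le_antisymm (le_sInf ?_) ?_
    · rintro v ⟨G, hGm, hGo, hAG, rfl⟩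
      exact measure_mono hAG
    · refine ENNReal.le_of_forall_pos_le_add fun ε hε hlt => ?_
      obtain ⟨F, G, hFm, hGm, hFc, hGo, hFA, hAG, hν⟩ := happrox ε (by exact_mod_cast hε.ne')
      refine le_trans (sInf_le ⟨G, hGm, hGo, hAG, rfl⟩) ?_
      calc ν G ≤ ν (G ∩ F) + ν (G \ F) := measure_le_inter_add_diff ν G F
        _ ≤ ν A + ε := add_le_add (measure_mono (inter_subset_right.trans hFA)) hν
end

section
/- If a set X ⊆ ℝ is porous (there is c ∈ (0,1) such that for every x ∈ X and every r ∈ (0,1) there exists y with B(y, cr) ⊆ B(x,r) \ X), then the Hausdorff dimension of X is strictly less than 1. -/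
open Set Metric MeasureTheory ENNReal NNReal

section PorousAux

variable {X : Set ℝ} {c : ℝ} {M : ℕ}

/-- Gap lemma: every interval of length `ℓ ≤ 1` contains a closed subinterval of
length at least `c·ℓ/3` disjoint from a porous set `X`. -/
lemma porous_gap (hc0 : 0 < c) (hc1 : c < 1)
    (hP : ∀ x ∈ X, ∀ r ∈ Set.Ioo (0:ℝ) 1,
      ∃ y : ℝ, Metric.ball y (c * r) ⊆ Metric.ball x r \ X)
    (a ℓ : ℝ) (hl0 : 0 < ℓ) (hl1 : ℓ ≤ 1) :
    ∃ u v : ℝ, u ≤ v ∧ Icc u v ⊆ Icc a (a + ℓ) ∧ c * ℓ / 3 ≤ v - u ∧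
      ∀ z ∈ Icc u v, z ∉ X := by
  by_cases hX : ∃ x ∈ X, x ∈ Icc (a + ℓ/3) (a + 2*ℓ/3)
  · obtain ⟨x, hxX, hxm⟩ := hX
    have hx1 : a + ℓ/3 ≤ x := hxm.1
    have hx2 : x ≤ a + 2*ℓ/3 := hxm.2
    obtain ⟨y, hy⟩ := hP x hxX (ℓ/3) ⟨by linarith, by linarith⟩
    have hcl : 0 < c * ℓ := mul_pos hc0 hl0
    have hb : Icc (y - c*ℓ/6) (y + c*ℓ/6) ⊆ ball x (ℓ/3) \ X := by
      refine subset_trans ?_ hy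
      rw [Real.ball_eq_Ioo]
      exact Icc_subset_Ioo (by nlinarith) (by nlinarith)
    refine ⟨y - c*ℓ/6, y + c*ℓ/6, by linarith, fun z hz => ?_, by linarith,
      fun z hz => (hb hz).2⟩
    have h1 := (hb hz).1
    rw [Real.ball_eq_Ioo] at h1
    exact ⟨by linarith [h1.1], by linarith [h1.2]⟩
  · push_neg at hX
    exact ⟨a + ℓ/3, a + 2*ℓ/3, by linarith,
      Icc_subset_Icc (by linarith) (by linarith), by nlinarith,
      fun z hz hzX => hX z hzX hz⟩

/-- One subdivision step: an interval of length `ℓ ≤ 1` can be covered, up to points of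
`X`, by at most `M - 1` of its `M` grid subintervals of length `ℓ/M`. -/
lemma porous_step (hc0 : 0 < c) (hc1 : c < 1)
    (hP : ∀ x ∈ X, ∀ r ∈ Set.Ioo (0:ℝ) 1,
      ∃ y : ℝ, Metric.ball y (c * r) ⊆ Metric.ball x r \ X)
    (hM3 : 3 ≤ M) (hMc : 6 / c ≤ (M : ℝ))
    (a ℓ : ℝ) (hl0 : 0 < ℓ) (hl1 : ℓ ≤ 1) :
    ∃ t : Finset ℝ, t.card ≤ M - 1 ∧
      X ∩ Icc a (a + ℓ) ⊆ ⋃ y ∈ t, Icc y (y + ℓ / M) := by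
  have hM0 : (0:ℝ) < M := by
    have : (3:ℝ) ≤ (M:ℝ) := by exact_mod_cast hM3
    linarith
  obtain ⟨u, v, huv, hsub, hlen, hgap⟩ := porous_gap hc0 hc1 hP a ℓ hl0 hl1
  have hu : a ≤ u := (hsub (left_mem_Icc.2 huv)).1
  have hv : v ≤ a + ℓ := (hsub (right_mem_Icc.2 huv)).2
  set g : ℝ := ℓ / M with hg
  have hg0 : 0 < g := div_pos hl0 hM0
  have h6 : 6 ≤ (M:ℝ) * c := (div_le_iff₀ hc0).1 hMc
  have hgc : g ≤ c * ℓ / 6 := by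
    rw [hg, div_le_div_iff₀ hM0 (by norm_num : (0:ℝ) < 6)]
    nlinarith [hl0.le]
  have h2g : 2 * g ≤ c * ℓ / 3 := by linarith
  set i : ℕ := ⌈(u - a) / g⌉₊ with hi
  have hua : 0 ≤ (u - a) / g := div_nonneg (by linarith) hg0.le
  have hlow : u ≤ a + i * g := by
    have h1 : (u - a) / g ≤ (i:ℝ) := Nat.le_ceil _
    have h2 := (div_le_iff₀ hg0).1 h1
    linarith
  have hhigh : a + ((i:ℝ) + 1) * g ≤ v := by
    have h1 : (i:ℝ) < (u - a) / g + 1 := Nat.ceil_lt_add_one hua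
    have h3 := mul_lt_mul_of_pos_right h1 hg0
    rw [add_mul, one_mul, div_mul_cancel₀ _ hg0.ne'] at h3
    have h4 : ((i:ℝ) + 1) * g = (i:ℝ) * g + g := by ring
    linarith
  have hiM : i < M := by
    have hMg : (M:ℝ) * g = ℓ := by
      rw [hg]; field_simp
    have h4 : ((i:ℝ) + 1) * g ≤ (M:ℝ) * g := by rw [hMg]; linarith
    have h5 : (i:ℝ) + 1 ≤ (M:ℝ) := le_of_mul_le_mul_right h4 hg0
    have : (i:ℝ) < (M:ℝ) := by linarith
    exact_mod_cast this
  refine ⟨(Finset.range M \ {i}).image (fun j : ℕ => a + j * g), ?_, ?_⟩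
  · refine le_trans Finset.card_image_le ?_
    rw [Finset.card_sdiff_of_subset (by simpa using hiM)]
    simp
  · rintro x ⟨hxX, hxa, hxb⟩
    set j : ℕ := min ⌊(x - a) / g⌋₊ (M - 1) with hj
    have hjM : j < M := lt_of_le_of_lt (min_le_right _ _) (by omega)
    have hjle : (j:ℝ) ≤ (x - a) / g :=
      le_trans (Nat.cast_le.2 (min_le_left _ _))
        (Nat.floor_le (div_nonneg (by linarith) hg0.le))
    have hxlow : a + (j:ℝ) * g ≤ x := by
      have h2 := (le_div_iff₀ hg0).1 hjle
      linarith
    have hxhigh : x ≤ a + (j:ℝ) * g + g := by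
      rcases le_or_gt ⌊(x - a) / g⌋₊ (M - 1) with hc' | hc'
      · have hjf : j = ⌊(x - a) / g⌋₊ := min_eq_left hc'
        have h1 : (x - a) / g < (j:ℝ) + 1 := by
          rw [hjf]; push_cast; exact Nat.lt_floor_add_one _
        have h2 := (div_lt_iff₀ hg0).1 h1
        nlinarith
      · have hjf : j = M - 1 := min_eq_right hc'.le
        have hMg : (M:ℝ) * g = ℓ := by rw [hg]; field_simp
        have hcast : (j:ℝ) + 1 = (M:ℝ) := by
          rw [hjf]
          have h1M : 1 ≤ M := by omega
          push_cast [Nat.cast_sub h1M]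
          ring
        have : a + (j:ℝ) * g + g = a + ((j:ℝ) + 1) * g := by ring
        rw [this, hcast, hMg]
        linarith
    have hji : j ≠ i := by
      intro he
      refine hgap x ⟨?_, ?_⟩ hxX
      · rw [he] at hxlow; linarith
      · rw [he] at hxhigh
        have h4 : ((i:ℝ) + 1) * g = (i:ℝ) * g + g := by ring
        linarith
    refine Set.mem_iUnion₂.2 ⟨a + (j:ℝ) * g, ?_, hxlow, hxhigh⟩
    exact Finset.mem_image.2 ⟨j, Finset.mem_sdiff.2
      ⟨Finset.mem_range.2 hjM, by simp [hji]⟩, rfl⟩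

/-- Iterated covering: `X ∩ [a, a+1]` is covered by at most `(M-1)^n` intervals of
length `M⁻ⁿ`. -/
lemma porous_cover (hc0 : 0 < c) (hc1 : c < 1)
    (hP : ∀ x ∈ X, ∀ r ∈ Set.Ioo (0:ℝ) 1,
      ∃ y : ℝ, Metric.ball y (c * r) ⊆ Metric.ball x r \ X)
    (hM3 : 3 ≤ M) (hMc : 6 / c ≤ (M : ℝ)) :
    ∀ (n : ℕ) (a : ℝ), ∃ t : Finset ℝ, t.card ≤ (M-1)^n ∧
      X ∩ Icc a (a + 1) ⊆ ⋃ y ∈ t, Icc y (y + (1/(M:ℝ))^n) := by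
  have hM0 : (0:ℝ) < M := by
    have : (3:ℝ) ≤ (M:ℝ) := by exact_mod_cast hM3
    linarith
  have hM1 : (1:ℝ) ≤ (M:ℝ) := by linarith [show (3:ℝ) ≤ (M:ℝ) by exact_mod_cast hM3]
  intro n
  induction n with
  | zero =>
    intro a
    refine ⟨{a}, by simp, ?_⟩
    simpa using inter_subset_right
  | succ n ih =>
    intro a
    obtain ⟨t, htc, hts⟩ := ih a
    have hpos : (0:ℝ) < (1/(M:ℝ))^n := by positivity
    have hle1 : (1/(M:ℝ))^n ≤ 1 := by
      apply pow_le_one₀ (by positivity)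
      rw [div_le_one hM0]
      linarith
    choose f hf1 hf2 using fun y : ℝ =>
      porous_step hc0 hc1 hP hM3 hMc y ((1/(M:ℝ))^n) hpos hle1
    refine ⟨t.biUnion f, ?_, ?_⟩
    · refine le_trans Finset.card_biUnion_le ?_
      calc ∑ y ∈ t, (f y).card ≤ ∑ _y ∈ t, (M-1) := Finset.sum_le_sum fun y _ => hf1 y
        _ = t.card * (M-1) := by rw [Finset.sum_const, smul_eq_mul]
        _ ≤ (M-1)^n * (M-1) := Nat.mul_le_mul_right _ htc
        _ = (M-1)^(n+1) := (pow_succ _ _).symm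
    · intro x hx
      obtain ⟨y, hyt, hxy⟩ := Set.mem_iUnion₂.1 (hts hx)
      obtain ⟨z, hzf, hxz⟩ := Set.mem_iUnion₂.1 (hf2 y ⟨hx.1, hxy⟩)
      refine Set.mem_iUnion₂.2 ⟨z, Finset.mem_biUnion.2 ⟨y, hyt, hzf⟩, ?_⟩
      have hpow : (1/(M:ℝ))^n / M = (1/(M:ℝ))^(n+1) := by
        rw [pow_succ]; ring
      rwa [← hpow]

end PorousAux

/-- If `X ⊆ ℝ` is porous (there is `c ∈ (0,1)` such that every ball `B(x,r)` with
`x ∈ X` and `r ∈ (0,1)` contains a sub-ball of radius `c·r` disjoint from `X`), then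
the Hausdorff dimension of `X` is strictly less than `1`. -/
theorem porous_dimH_lt_one (X : Set ℝ)
    (h : ∃ c ∈ Set.Ioo (0:ℝ) 1, ∀ x ∈ X, ∀ r ∈ Set.Ioo (0:ℝ) 1,
      ∃ y : ℝ, Metric.ball y (c * r) ⊆ Metric.ball x r \ X) :
    dimH X < 1 := by
  obtain ⟨c, ⟨hc0, hc1⟩, hP⟩ := h
  set M : ℕ := max ⌈6 / c⌉₊ 3 with hMdef
  have hM3 : 3 ≤ M := le_max_right _ _
  have hMc : 6 / c ≤ (M : ℝ) :=
    le_trans (Nat.le_ceil _) (by exact_mod_cast Nat.cast_le.2 (le_max_left ⌈6 / c⌉₊ 3))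
  have hM3R : (3:ℝ) ≤ (M:ℝ) := by exact_mod_cast hM3
  have hM0 : (0:ℝ) < M := by linarith
  have hM1 : (1:ℝ) < (M:ℝ) := by linarith
  set d : ℝ := Real.logb M ((M:ℝ) - 1) with hd
  have hd0 : 0 ≤ d := Real.logb_nonneg hM1 (by linarith)
  have hd1 : d < 1 := by
    have h1 : d < Real.logb (M:ℝ) (M:ℝ) :=
      Real.logb_lt_logb hM1 (by linarith) (by linarith)
    rwa [Real.logb_self_eq_one hM1] at h1
  have hMd : (M:ℝ) ^ d = (M:ℝ) - 1 :=
    Real.rpow_logb hM0 (by linarith) (by linarith)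
  -- dimension bound on each unit piece
  have key : ∀ a : ℝ, dimH (X ∩ Icc a (a+1)) ≤ ENNReal.ofReal d := by
    intro a
    choose t htc hts using fun n : ℕ => porous_cover hc0 hc1 hP hM3 hMc n a
    have hmeas : μH[d] (X ∩ Icc a (a+1)) ≤ 1 := by
      have hle := MeasureTheory.Measure.hausdorffMeasure_le_liminf_sum (ι := fun n => {y // y ∈ t n})
        d (X ∩ Icc a (a+1)) (l := Filter.atTop)
        (fun n => ENNReal.ofReal ((1/(M:ℝ))^n))
        (by
          have h0 : Filter.Tendsto (fun n : ℕ => (1/(M:ℝ))^n) Filter.atTop (nhds 0) := by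
            apply _root_.tendsto_pow_atTop_nhds_zero_of_lt_one (by positivity)
            rw [div_lt_one hM0]; linarith
          simpa [ENNReal.ofReal_zero] using (ENNReal.tendsto_ofReal h0))
        (fun n i => Icc (i:ℝ) ((i:ℝ) + (1/(M:ℝ))^n))
        (by
          refine Filter.Eventually.of_forall fun n => fun i => ?_
          rw [Real.ediam_Icc]
          simp)
        (by
          refine Filter.Eventually.of_forall fun n => fun x hx => ?_
          obtain ⟨y, hy, hxy⟩ := Set.mem_iUnion₂.1 (hts n hx)
          exact Set.mem_iUnion.2 ⟨⟨y, hy⟩, hxy⟩)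
      refine le_trans hle ?_
      refine Filter.liminf_le_of_frequently_le' (Filter.Frequently.of_forall fun n => ?_)
      -- bound each term by 1
      have hp : (0:ℝ) ≤ (1/(M:ℝ))^n := by positivity
      have hsum : (∑ i : {y // y ∈ t n},
          ediam (Icc (i:ℝ) ((i:ℝ) + (1/(M:ℝ))^n)) ^ d)
          = ((t n).card : ℝ≥0∞) * ENNReal.ofReal (((1/(M:ℝ))^n) ^ d) := by
        have hdiam : ∀ i : {y // y ∈ t n},
            ediam (Icc (i:ℝ) ((i:ℝ) + (1/(M:ℝ))^n)) ^ d
              = ENNReal.ofReal (((1/(M:ℝ))^n) ^ d) := by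
          intro i
          rw [Real.ediam_Icc, add_sub_cancel_left,
            ← ENNReal.ofReal_rpow_of_nonneg hp hd0]
        rw [Finset.sum_congr rfl fun i _ => hdiam i, Finset.sum_const,
          Finset.card_univ, Fintype.card_coe, nsmul_eq_mul]
      rw [hsum]
      -- compute (1/M)^n ^ d = (1/(M-1))^n
      have hq : ((1/(M:ℝ))^n) ^ d = (1/((M:ℝ)-1))^n := by
        have hMpos : (0:ℝ) ≤ 1/(M:ℝ) := by positivity
        have h1 : ((1/(M:ℝ))^n) ^ d = ((1/(M:ℝ)) ^ d)^n := by
          rw [← Real.rpow_natCast (1/(M:ℝ)) n, ← Real.rpow_mul hMpos, mul_comm,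
            Real.rpow_mul hMpos, Real.rpow_natCast]
        have h2 : (1/(M:ℝ)) ^ d = 1/((M:ℝ)-1) := by
          rw [one_div, Real.inv_rpow hM0.le, hMd, one_div]
        rw [h1, h2]
      rw [hq]
      have hcard : ((t n).card : ℝ≥0∞) ≤ ENNReal.ofReal (((M:ℝ)-1)^n) := by
        have h1 : ((t n).card : ℝ≥0∞) ≤ (((M-1)^n : ℕ) : ℝ≥0∞) := by
          exact_mod_cast htc n
        refine le_trans h1 ?_
        rw [ENNReal.ofReal_pow (by linarith : (0:ℝ) ≤ (M:ℝ)-1)]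
        have : (((M-1)^n : ℕ) : ℝ≥0∞) = (((M-1 : ℕ) : ℝ≥0∞))^n := by push_cast; ring
        rw [this]
        refine pow_le_pow_left' ?_ n
        rw [show ((M:ℝ)-1) = ((M-1 : ℕ) : ℝ) by
          push_cast [Nat.cast_sub (by omega : 1 ≤ M)]; ring]
        rw [ENNReal.ofReal_natCast]
      calc ((t n).card : ℝ≥0∞) * ENNReal.ofReal ((1/((M:ℝ)-1))^n)
          ≤ ENNReal.ofReal (((M:ℝ)-1)^n) * ENNReal.ofReal ((1/((M:ℝ)-1))^n) :=
            mul_le_mul_left hcard _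
        _ = ENNReal.ofReal (((M:ℝ)-1)^n * (1/((M:ℝ)-1))^n) :=
            (ENNReal.ofReal_mul (pow_nonneg (by linarith) n)).symm
        _ = 1 := by
            rw [← mul_pow, mul_one_div_cancel (by linarith : ((M:ℝ)-1) ≠ 0)]
            simp
    -- conclude dimension bound
    have hne : μH[((Real.toNNReal d : ℝ≥0) : ℝ)] (X ∩ Icc a (a+1)) ≠ ⊤ := by
      rw [Real.coe_toNNReal d hd0]
      exact ne_top_of_le_ne_top ENNReal.one_ne_top hmeas
    have := dimH_le_of_hausdorffMeasure_ne_top hne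
    rwa [show ((Real.toNNReal d : ℝ≥0) : ℝ≥0∞) = ENNReal.ofReal d from rfl] at this
  -- assemble over ℤ
  have hXsub : X ⊆ ⋃ k : ℤ, X ∩ Icc (k:ℝ) ((k:ℝ)+1) := by
    intro x hx
    exact Set.mem_iUnion.2 ⟨⌊x⌋, hx, Int.floor_le x, by linarith [Int.lt_floor_add_one x]⟩
  have hdim : dimH X ≤ ENNReal.ofReal d := by
    calc dimH X ≤ dimH (⋃ k : ℤ, X ∩ Icc (k:ℝ) ((k:ℝ)+1)) := dimH_mono hXsub
      _ = ⨆ k : ℤ, dimH (X ∩ Icc (k:ℝ) ((k:ℝ)+1)) := dimH_iUnion _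
      _ ≤ ENNReal.ofReal d := iSup_le fun k => key k
  exact lt_of_le_of_lt hdim (ENNReal.ofReal_lt_one.2 hd1)
end
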